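/- Let $q^N \in [0,\infty)^V$ be a sequence with $q^N \to q^0 \in [0,\infty)^V$, and for each $N$ let $f^N$ be the solution of the complete-graph initial value problem with initial condition $q^N$, and let $f$ be the solution with initial condition $q^0$. Then $f^N \to f$ uniformly on every compact subset of $[0,\infty)$. -/

import Mathlib

open Finset
open Filter

/-- The fluid drift of QB-CSMA on a complete interference graph:
`g_v(q) = λ_v - q_v^a / ∑_w q_w^a`. -/
noncomputable def gdrift {V : Type*} [Fintype V] (a : ℝ) (lam : V → ℝ) (q : V → ℝ) :
    V → ℝ :=
  fun v => lam v - q v ^ a / ∑ w, q w ^ a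

/-- A solution of the complete-graph initial value problem with initial condition `q⁰`:
a continuous `f : [0,∞) → [0,∞)^V` with `f(0) = q⁰`, whose sum of coordinates is
`max(s(q⁰) + (s(λ)-1) t, 0)`, and which satisfies `f'(t) = g(f(t))` at every `t > 0`
with `f(t) ≠ 0`. -/
def IsCGSolution {V : Type*} [Fintype V] (a : ℝ) (lam : V → ℝ) (q0 : V → ℝ)
    (f : ℝ → V → ℝ) : Prop :=
  ContinuousOn f (Set.Ici 0) ∧ f 0 = q0 ∧
    (∀ t, 0 ≤ t → ∀ v, 0 ≤ f t v) ∧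
    (∀ t, 0 ≤ t → ∑ v, f t v = max ((∑ v, q0 v) + ((∑ v, lam v) - 1) * t) 0) ∧
    (∀ t, 0 < t → f t ≠ 0 → HasDerivAt f (gdrift a lam (f t)) t)

/-- `τ⁰(f) = inf {t > 0 : min_v f_v(t) ≤ 0}`, with the convention `inf ∅ = +∞`
(realized by taking the infimum in the extended reals). -/
noncomputable def tau0 {V : Type*} (f : ℝ → V → ℝ) : EReal :=
  sInf ((fun t : ℝ => (t : EReal)) '' {t : ℝ | 0 < t ∧ ∃ v, f t v ≤ 0})


/-- Pointwise/averaged algebraic inequality behind L1-contractivity of the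
complete-graph drift. -/
lemma cg_key_ineq {V : Type*} [Fintype V] (x y : V → ℝ)
    (hx : ∀ v, 0 ≤ x v) (hy : ∀ v, 0 ≤ y v)
    (hX : 0 < ∑ w, x w) (hY : 0 < ∑ w, y w) :
    ∑ v, (if x v = y v then |y v / (∑ w, y w) - x v / (∑ w, x w)|
      else if y v < x v then y v / (∑ w, y w) - x v / (∑ w, x w)
      else x v / (∑ w, x w) - y v / (∑ w, y w)) ≤ 0 := by
  set X := ∑ w, x w with hXdef
  set Y := ∑ w, y w with hYdef
  have hXY : 0 < X * Y := mul_pos hX hY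
  set N : V → ℝ := fun v => if x v = y v then |y v * X - x v * Y|
      else if y v < x v then y v * X - x v * Y
      else x v * Y - y v * X with hN
  have hdiv : ∀ v, (if x v = y v then |y v / Y - x v / X|
      else if y v < x v then y v / Y - x v / X
      else x v / X - y v / Y) = N v / (X * Y) := by
    intro v
    have h1 : y v / Y - x v / X = (y v * X - x v * Y) / (X * Y) := by
      field_simp
    have h2 : x v / X - y v / Y = (x v * Y - y v * X) / (X * Y) := by
      field_simp
    simp only [hN]
    rcases eq_or_ne (x v) (y v) with h | h
    · rw [if_pos h, if_pos h, h1, abs_div, abs_of_pos hXY]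
    · rcases lt_or_ge (y v) (x v) with h' | h'
      · rw [if_neg h, if_neg h, if_pos h', if_pos h', h1]
      · rw [if_neg h, if_neg h, if_neg (not_lt.mpr h'), if_neg (not_lt.mpr h'), h2]
  rw [Finset.sum_congr rfl fun v _ => hdiv v, ← Finset.sum_div]
  apply div_nonpos_of_nonpos_of_nonneg _ hXY.le
  -- pointwise bound on the numerators
  have hpt : ∀ v, N v ≤ min (x v) (y v) * max X Y - max (x v) (y v) * min X Y := by
    intro v
    rcases eq_or_ne (x v) (y v) with h | h
    · simp only [hN, if_pos h]
      rw [h, min_self, max_self]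
      rcases le_total X Y with hxy | hxy
      · rw [max_eq_right hxy, min_eq_left hxy,
          abs_of_nonpos (by nlinarith [hy v] : y v * X - y v * Y ≤ 0)]
        ring_nf; exact le_rfl
      · rw [max_eq_left hxy, min_eq_right hxy,
          abs_of_nonneg (by nlinarith [hy v] : 0 ≤ y v * X - y v * Y)]
    · rcases lt_or_ge (y v) (x v) with h' | h'
      · simp only [hN, if_neg h, if_pos h']
        rw [min_eq_right h'.le, max_eq_left h'.le]
        have h1 : y v * X ≤ y v * max X Y :=
          mul_le_mul_of_nonneg_left (le_max_left X Y) (hy v)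
        have h2 : x v * min X Y ≤ x v * Y :=
          mul_le_mul_of_nonneg_left (min_le_right X Y) (hx v)
        linarith
      · simp only [hN, if_neg h, if_neg (not_lt.mpr h')]
        rw [min_eq_left h', max_eq_right h']
        have h1 : x v * Y ≤ x v * max X Y :=
          mul_le_mul_of_nonneg_left (le_max_right X Y) (hx v)
        have h2 : y v * min X Y ≤ y v * X :=
          mul_le_mul_of_nonneg_left (min_le_left X Y) (hy v)
        linarith
  have hS : ∑ v, N v ≤ ∑ v, (min (x v) (y v) * max X Y - max (x v) (y v) * min X Y) :=
    Finset.sum_le_sum fun v _ => hpt v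
  have hmin : ∑ v, min (x v) (y v) ≤ min X Y :=
    le_min (by rw [hXdef]; exact Finset.sum_le_sum fun v _ => min_le_left _ _)
      (by rw [hYdef]; exact Finset.sum_le_sum fun v _ => min_le_right _ _)
  have hmax : max X Y ≤ ∑ v, max (x v) (y v) :=
    max_le (by rw [hXdef]; exact Finset.sum_le_sum fun v _ => le_max_left _ _)
      (by rw [hYdef]; exact Finset.sum_le_sum fun v _ => le_max_right _ _)
  have hmXY : (0:ℝ) ≤ max X Y := le_trans hX.le (le_max_left _ _)
  have hmXY' : (0:ℝ) ≤ min X Y := le_min hX.le hY.le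
  have expand : ∑ v, (min (x v) (y v) * max X Y - max (x v) (y v) * min X Y)
      = (∑ v, min (x v) (y v)) * max X Y - (∑ v, max (x v) (y v)) * min X Y := by
    rw [Finset.sum_sub_distrib, ← Finset.sum_mul, ← Finset.sum_mul]
  have h1 : (∑ v, min (x v) (y v)) * max X Y ≤ min X Y * max X Y :=
    mul_le_mul_of_nonneg_right hmin hmXY
  have h2 : min X Y * max X Y ≤ (∑ v, max (x v) (y v)) * min X Y := by
    rw [mul_comm (min X Y) (max X Y)]
    exact mul_le_mul_of_nonneg_right hmax hmXY'
  calc ∑ v, N v ≤ _ := hS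
    _ = _ := expand
    _ ≤ 0 := by linarith

lemma cg_sol_eq_zero_iff {V : Type*} [Fintype V] {a : ℝ} {lam r0 : V → ℝ} {h : ℝ → V → ℝ}
    (hh : IsCGSolution a lam r0 h) {s : ℝ} (hs : 0 ≤ s) :
    h s = 0 ↔ (∑ v, r0 v) + ((∑ v, lam v) - 1) * s ≤ 0 := by
  have hsum := hh.2.2.2.1 s hs
  constructor
  · intro h0
    rw [h0] at hsum
    simp only [Pi.zero_apply, Finset.sum_const_zero] at hsum
    have hle := le_max_left ((∑ v, r0 v) + ((∑ v, lam v) - 1) * s) 0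
    rw [← hsum] at hle
    exact hle
  · intro hle
    have h0 : ∑ v, h s v = 0 := by rw [hsum]; exact max_eq_right hle
    funext v
    exact (Finset.sum_eq_zero_iff_of_nonneg (fun v _ => hh.2.2.1 s hs v)).mp h0 v
      (Finset.mem_univ v)

lemma cg_l1_bound {V : Type*} [Fintype V] {a : ℝ} (ha : 0 < a) (lam : V → ℝ)
    (p0 q0 : V → ℝ) (f g : ℝ → V → ℝ)
    (hf : IsCGSolution a lam p0 f) (hg : IsCGSolution a lam q0 g)
    (t : ℝ) (ht : 0 ≤ t) :
    ∑ v, |g t v - f t v| ≤ ∑ v, |q0 v - p0 v| := by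
  have habs_nonneg : (0:ℝ) ≤ ∑ v, |q0 v - p0 v| :=
    Finset.sum_nonneg fun v _ => abs_nonneg _
  have hsubdiff : (∑ v, q0 v) - (∑ v, p0 v) ≤ ∑ v, |q0 v - p0 v| := by
    calc (∑ v, q0 v) - (∑ v, p0 v) = ∑ v, (q0 v - p0 v) := (Finset.sum_sub_distrib _ _).symm
      _ ≤ |∑ v, (q0 v - p0 v)| := le_abs_self _
      _ ≤ ∑ v, |q0 v - p0 v| := Finset.abs_sum_le_sum_abs _ _
  have hsubdiff' : (∑ v, p0 v) - (∑ v, q0 v) ≤ ∑ v, |q0 v - p0 v| := by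
    calc (∑ v, p0 v) - (∑ v, q0 v) = ∑ v, (p0 v - q0 v) := (Finset.sum_sub_distrib _ _).symm
      _ ≤ |∑ v, (p0 v - q0 v)| := le_abs_self _
      _ ≤ ∑ v, |p0 v - q0 v| := Finset.abs_sum_le_sum_abs _ _
      _ = ∑ v, |q0 v - p0 v| := Finset.sum_congr rfl fun v _ => abs_sub_comm _ _
  by_cases hfz : f t = 0 <;> by_cases hgz : g t = 0
  · simp only [hfz, hgz, Pi.zero_apply, sub_self, abs_zero, Finset.sum_const_zero]
    exact habs_nonneg
  · -- f t = 0, g t ≠ 0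
    have h1 : (∑ v, p0 v) + ((∑ v, lam v) - 1) * t ≤ 0 := (cg_sol_eq_zero_iff hf ht).mp hfz
    have hW : ∑ v, |g t v - f t v| = ∑ v, g t v :=
      Finset.sum_congr rfl fun v _ => by
        rw [hfz]; simp [abs_of_nonneg (hg.2.2.1 t ht v)]
    rw [hW, hg.2.2.2.1 t ht]
    apply max_le _ habs_nonneg
    calc (∑ v, q0 v) + ((∑ v, lam v) - 1) * t
        = ((∑ v, p0 v) + ((∑ v, lam v) - 1) * t) + ((∑ v, q0 v) - (∑ v, p0 v)) := by ring
      _ ≤ (∑ v, q0 v) - (∑ v, p0 v) := by linarith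
      _ ≤ ∑ v, |q0 v - p0 v| := hsubdiff
  · -- g t = 0, f t ≠ 0
    have h1 : (∑ v, q0 v) + ((∑ v, lam v) - 1) * t ≤ 0 := (cg_sol_eq_zero_iff hg ht).mp hgz
    have hW : ∑ v, |g t v - f t v| = ∑ v, f t v :=
      Finset.sum_congr rfl fun v _ => by
        rw [hgz]; simp [abs_of_nonneg (hf.2.2.1 t ht v)]
    rw [hW, hf.2.2.2.1 t ht]
    apply max_le _ habs_nonneg
    calc (∑ v, p0 v) + ((∑ v, lam v) - 1) * t
        = ((∑ v, q0 v) + ((∑ v, lam v) - 1) * t) + ((∑ v, p0 v) - (∑ v, q0 v)) := by ring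
      _ ≤ (∑ v, p0 v) - (∑ v, q0 v) := by linarith
      _ ≤ ∑ v, |q0 v - p0 v| := hsubdiff'
  · -- both nonzero
    rcases ht.eq_or_lt with rfl | ht0
    · simp [hf.2.1, hg.2.1]
    have hp0 : ∀ v, 0 ≤ p0 v := fun v => hf.2.1 ▸ hf.2.2.1 0 le_rfl v
    have hq0 : ∀ v, 0 ≤ q0 v := fun v => hg.2.1 ▸ hg.2.2.1 0 le_rfl v
    have hcp : (0:ℝ) ≤ ∑ v, p0 v := Finset.sum_nonneg fun v _ => hp0 v
    have hcq : (0:ℝ) ≤ ∑ v, q0 v := Finset.sum_nonneg fun v _ => hq0 v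
    have hfzt : ¬((∑ v, p0 v) + ((∑ v, lam v) - 1) * t ≤ 0) :=
      fun h => hfz ((cg_sol_eq_zero_iff hf ht).mpr h)
    have hgzt : ¬((∑ v, q0 v) + ((∑ v, lam v) - 1) * t ≤ 0) :=
      fun h => hgz ((cg_sol_eq_zero_iff hg ht).mpr h)
    push_neg at hfzt hgzt
    have hnz : ∀ z, 0 < z → z ≤ t → f z ≠ 0 ∧ g z ≠ 0 := by
      intro z hz hzt
      have harith : ∀ c : ℝ, 0 ≤ c → 0 < c + ((∑ v, lam v) - 1) * t →
          0 < c + ((∑ v, lam v) - 1) * z := by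
        intro c hc hct
        rcases le_or_gt ((∑ v, lam v) - 1) 0 with hs | hs
        · have : ((∑ v, lam v) - 1) * t ≤ ((∑ v, lam v) - 1) * z :=
            mul_le_mul_of_nonpos_left hzt hs
          linarith
        · nlinarith
      constructor
      · rw [Ne, cg_sol_eq_zero_iff hf hz.le, not_le]
        exact harith _ hcp hfzt
      · rw [Ne, cg_sol_eq_zero_iff hg hz.le, not_le]
        exact harith _ hcq hgzt
    set W : ℝ → ℝ := fun z => ∑ v, |g z v - f z v| with hW
    have hWcont : ContinuousOn W (Set.Ici 0) := by
      apply continuousOn_finset_sum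
      intro v _
      exact (((continuous_apply v).comp_continuousOn hg.1).sub
        ((continuous_apply v).comp_continuousOn hf.1)).abs
    have hkey : ∀ t0, 0 < t0 → t0 < t → W t ≤ W t0 := by
      intro t0 ht00 ht0t
      have G := le_gronwallBound_of_liminf_deriv_right_le (f := W)
        (f' := fun _ => (0:ℝ)) (δ := W t0) (K := 0) (ε := 0) (a := t0) (b := t)
        (hWcont.mono fun z hz => le_trans ht00.le hz.1)
        ?_ le_rfl (fun z _ => by simp) t ⟨ht0t.le, le_rfl⟩
      · simpa [gronwallBound_K0] using G
      intro z hz r hr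
      have hz0 : 0 < z := lt_of_lt_of_le ht00 hz.1
      obtain ⟨hfz', hgz'⟩ := hnz z hz0 hz.2.le
      have Hf : HasDerivAt f (gdrift a lam (f z)) z := hf.2.2.2.2 z hz0 hfz'
      have Hg : HasDerivAt g (gdrift a lam (g z)) z := hg.2.2.2.2 z hz0 hgz'
      set d' : V → ℝ := fun v => gdrift a lam (g z) v - gdrift a lam (f z) v with hd'
      have Hd : ∀ v, HasDerivAt (fun w => g w v - f w v) (d' v) z := fun v =>
        (hasDerivAt_pi.mp Hg v).sub (hasDerivAt_pi.mp Hf v)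
      set e : V → ℝ := fun v =>
        if g z v = f z v then |d' v| else if f z v < g z v then d' v else -(d' v) with he
      have Hv : ∀ v, Filter.Tendsto
          (fun w => (w - z)⁻¹ * (|g w v - f w v| - |g z v - f z v|))
          (nhdsWithin z (Set.Ioi z)) (nhds (e v)) := by
        intro v
        have hs : Filter.Tendsto
            (fun w => (w - z)⁻¹ * ((g w v - f w v) - (g z v - f z v)))
            (nhdsWithin z (Set.Ioi z)) (nhds (d' v)) := by
          have h1 := hasDerivAt_iff_tendsto_slope.mp (Hd v)
          have h2 := h1.mono_left
            (nhdsWithin_mono z (fun w hw => ne_of_gt hw))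
          exact h2.congr fun w => by rw [slope_def_field]; rw [div_eq_inv_mul]
        rcases lt_trichotomy (g z v) (f z v) with hlt | heq | hgt
        · have hev : e v = -(d' v) := by
            simp only [he, if_neg (ne_of_lt hlt), if_neg (not_lt.mpr hlt.le)]
          rw [hev]
          have hcont : ∀ᶠ w in nhdsWithin z (Set.Ioi z), g w v - f w v < 0 := by
            have hc : Filter.Tendsto (fun w => g w v - f w v) (nhds z)
                (nhds (g z v - f z v)) := (Hd v).continuousAt
            exact (hc.eventually_lt_const (by linarith)).filter_mono nhdsWithin_le_nhds
          apply Filter.Tendsto.congr' _ hs.neg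
          filter_upwards [hcont] with w hw
          rw [abs_of_neg hw, abs_of_neg (by linarith : g z v - f z v < 0)]
          ring
        · have hev : e v = |d' v| := by simp only [he, if_pos heq]
          rw [hev]
          apply Filter.Tendsto.congr' _ hs.abs
          filter_upwards [self_mem_nhdsWithin] with w hw
          have hwz : 0 < w - z := sub_pos.mpr hw
          have h0 : g z v - f z v = 0 := sub_eq_zero.mpr heq
          rw [h0, sub_zero, abs_zero, sub_zero, abs_mul, abs_of_pos (inv_pos.mpr hwz)]
        · have hev : e v = d' v := by
            simp only [he, if_neg (ne_of_gt hgt), if_pos hgt]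
          rw [hev]
          have hcont : ∀ᶠ w in nhdsWithin z (Set.Ioi z), 0 < g w v - f w v := by
            have hc : Filter.Tendsto (fun w => g w v - f w v) (nhds z)
                (nhds (g z v - f z v)) := (Hd v).continuousAt
            exact (hc.eventually_const_lt (by linarith)).filter_mono nhdsWithin_le_nhds
          apply Filter.Tendsto.congr' _ hs
          filter_upwards [hcont] with w hw
          rw [abs_of_pos hw, abs_of_pos (by linarith : 0 < g z v - f z v)]
      have Hsum : Filter.Tendsto (fun w => (w - z)⁻¹ * (W w - W z))
          (nhdsWithin z (Set.Ioi z)) (nhds (∑ v, e v)) := by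
        have h := tendsto_finset_sum Finset.univ (fun v (_ : v ∈ Finset.univ) => Hv v)
        apply h.congr
        intro w
        rw [← Finset.mul_sum, ← Finset.sum_sub_distrib]
      have He : ∑ v, e v ≤ 0 := by
        have hXpos : 0 < ∑ w, (g z w) ^ a := by
          obtain ⟨w0, hw0⟩ := Function.ne_iff.mp hgz'
          have hgw : 0 < g z w0 := lt_of_le_of_ne (hg.2.2.1 z hz0.le w0) (Ne.symm hw0)
          exact Finset.sum_pos' (fun w _ => Real.rpow_nonneg (hg.2.2.1 z hz0.le w) a)
            ⟨w0, Finset.mem_univ w0, Real.rpow_pos_of_pos hgw a⟩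
        have hYpos : 0 < ∑ w, (f z w) ^ a := by
          obtain ⟨w0, hw0⟩ := Function.ne_iff.mp hfz'
          have hfw : 0 < f z w0 := lt_of_le_of_ne (hf.2.2.1 z hz0.le w0) (Ne.symm hw0)
          exact Finset.sum_pos' (fun w _ => Real.rpow_nonneg (hf.2.2.1 z hz0.le w) a)
            ⟨w0, Finset.mem_univ w0, Real.rpow_pos_of_pos hfw a⟩
        have hkey2 := cg_key_ineq (fun v => (g z v) ^ a) (fun v => (f z v) ^ a)
          (fun v => Real.rpow_nonneg (hg.2.2.1 z hz0.le v) a)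
          (fun v => Real.rpow_nonneg (hf.2.2.1 z hz0.le v) a) hXpos hYpos
        refine le_trans (le_of_eq (Finset.sum_congr rfl fun v _ => ?_)) hkey2
        have hd'v : d' v = (f z v) ^ a / (∑ w, (f z w) ^ a)
            - (g z v) ^ a / (∑ w, (g z w) ^ a) := by
          simp only [hd', gdrift]; ring
        rcases lt_trichotomy (g z v) (f z v) with hlt | heq | hgt
        · have hxy : (g z v) ^ a < (f z v) ^ a :=
            Real.rpow_lt_rpow (hg.2.2.1 z hz0.le v) hlt ha
          simp only [he, if_neg (ne_of_lt hlt), if_neg (not_lt.mpr hlt.le), hd'v,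
            if_neg (ne_of_lt hxy), if_neg (not_lt.mpr hxy.le)]
          ring
        · simp [he, heq, hd'v]
        · have hxy : (f z v) ^ a < (g z v) ^ a :=
            Real.rpow_lt_rpow (hf.2.2.1 z hz0.le v) hgt ha
          simp only [he, if_neg (ne_of_gt hgt), if_pos hgt, hd'v,
            if_neg (ne_of_gt hxy), if_pos hxy]
      exact ((Hsum.eventually_lt_const (lt_of_le_of_lt He hr))).frequently
    have hWt : ∀ᶠ t0 in nhdsWithin (0:ℝ) (Set.Ioi 0), W t ≤ W t0 := by
      filter_upwards [Ioc_mem_nhdsGT ht0] with t0 h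
      rcases h.2.eq_or_lt with rfl | hlt
      · exact le_rfl
      · exact hkey t0 h.1 hlt
    have hWc0 : Filter.Tendsto W (nhdsWithin (0:ℝ) (Set.Ioi 0)) (nhds (W 0)) :=
      (hWcont 0 Set.self_mem_Ici).mono_left (nhdsWithin_mono 0 Set.Ioi_subset_Ici_self)
    have hfin : W t ≤ W 0 := ge_of_tendsto hWc0 hWt
    calc ∑ v, |g t v - f t v| = W t := rfl
      _ ≤ W 0 := hfin
      _ = ∑ v, |q0 v - p0 v| := by simp [hW, hf.2.1, hg.2.1]


/-- continuity in the initial condition. If `q^N → q⁰` in `[0,∞)^V`,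
`f^N` solves the complete-graph initial value problem started from `q^N` and `f`
the one started from `q⁰`, then `f^N → f` uniformly on every compact subset of
`[0,∞)`. -/
theorem cgSolution_tendsto_of_tendsto {V : Type*} [Fintype V] [Nonempty V]
    (a : ℝ) (ha : 0 < a) (lam : V → ℝ) (hlam : ∀ v, 0 < lam v)
    (qN : ℕ → V → ℝ) (hqN : ∀ N v, 0 ≤ qN N v)
    (q0 : V → ℝ) (hq0 : ∀ v, 0 ≤ q0 v)
    (hconv : Filter.Tendsto qN Filter.atTop (nhds q0))
    (fN : ℕ → ℝ → V → ℝ) (hfN : ∀ N, IsCGSolution a lam (qN N) (fN N))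
    (f : ℝ → V → ℝ) (hf : IsCGSolution a lam q0 f) :
    ∀ K : Set ℝ, IsCompact K → K ⊆ Set.Ici 0 →
      TendstoUniformlyOn (fun N t => fN N t) f Filter.atTop K := by
  intro K _ hKsub
  rw [Metric.tendstoUniformlyOn_iff]
  intro ε hε
  have hsum : Filter.Tendsto (fun N => ∑ v, |qN N v - q0 v|) Filter.atTop (nhds 0) := by
    have h0 : (0:ℝ) = ∑ v : V, (0:ℝ) := by simp
    rw [h0]
    apply tendsto_finset_sum
    intro v _
    have hv : Filter.Tendsto (fun N => qN N v - q0 v) Filter.atTop (nhds 0) := by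
      have := (tendsto_pi_nhds.mp hconv v).sub tendsto_const_nhds (b := q0 v)
      simpa using this
    simpa using hv.abs
  filter_upwards [hsum.eventually_lt_const hε] with N hN t htK
  have ht : (0:ℝ) ≤ t := hKsub htK
  have hb := cg_l1_bound ha lam q0 (qN N) f (fN N) hf (hfN N) t ht
  have hd : dist (f t) (fN N t) ≤ ∑ v, |qN N v - q0 v| := by
    rw [dist_pi_le_iff (Finset.sum_nonneg fun v _ => abs_nonneg _)]
    intro v
    calc dist (f t v) (fN N t v) = |fN N t v - f t v| := by
          rw [Real.dist_eq, abs_sub_comm]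
      _ ≤ ∑ w, |fN N t w - f t w| :=
          Finset.single_le_sum (fun w _ => abs_nonneg (fN N t w - f t w)) (Finset.mem_univ v)
      _ ≤ ∑ w, |qN N w - q0 w| := hb
  exact lt_of_le_of_lt hd hN
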